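/- Let T be a string and fix a partition of T into contiguous blocks (p-regions) constructed greedily from left to right with respect to a pattern P: each block is a maximal-extension substring, meaning for every block boundary at position i, the substring formed by appending T[i] to the preceding block is not a substring of P aligned consistently (formally: the greedy minimal-length p-representation). Then this greedy p-representation has the minimum possible number of blocks among all p-representations of T with respect to P. -/

import Mathlib

/-- A segment `(l.drop a).take m` is contained in a segment `(l.drop b).take n`
when `b ≤ a` and `a + m ≤ b + n`. -/
lemma seg_infix_seg {α : Type*} (l : List α) {a b m n : ℕ} (hba : b ≤ a)
    (h : a + m ≤ b + n) : (l.drop a).take m <:+: (l.drop b).take n := by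
  have h1 : ((l.drop b).take n).drop (a - b) = (l.drop a).take (n - (a - b)) := by
    rw [List.drop_take, List.drop_drop]
    congr 2
    omega
  have h2 : (l.drop a).take m <+: (l.drop a).take (n - (a - b)) :=
    List.take_prefix_take_left (by omega)
  rw [← h1] at h2
  exact h2.isInfix.trans (List.drop_suffix _ _).isInfix

/-- The `k`-th block of a partition equals the corresponding segment of the
concatenation. -/
lemma block_eq_seg {α : Type*} (L : List (List α)) (k : ℕ) (hk : k < L.length) :
    L.get ⟨k, hk⟩ =
      ((L.flatten).drop ((L.take k).flatten.length)).take (L.get ⟨k, hk⟩).length := by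
  have h1 : L.flatten = (L.take k).flatten ++
      (L.get ⟨k, hk⟩ ++ (L.drop (k + 1)).flatten) := by
    conv_lhs => rw [← List.take_append_drop k L, List.flatten_append,
      List.drop_eq_getElem_cons hk, List.flatten_cons]
    rfl
  rw [h1, List.drop_left, List.take_left]

/-- Flatten of a prefix is no longer than flatten. -/
lemma flatten_take_le {α : Type*} (L : List (List α)) (n : ℕ) :
    (L.take n).flatten.length ≤ L.flatten.length := by
  conv_rhs => rw [← List.take_append_drop n L, List.flatten_append]
  rw [List.length_append]
  omega

/-- Prefix flatten plus the next block fits in the flatten. -/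
lemma flatten_take_add_le {α : Type*} (L : List (List α)) (k : ℕ) (hk : k < L.length) :
    (L.take k).flatten.length + (L.get ⟨k, hk⟩).length ≤ L.flatten.length := by
  conv_rhs => rw [← List.take_append_drop k L, List.flatten_append,
    List.drop_eq_getElem_cons hk, List.flatten_cons]
  simp only [List.length_append, List.get_eq_getElem]
  omega

/-- `take (k+1)` splits off the `k`-th element. -/
lemma take_succ_eq {α : Type*} (L : List α) (k : ℕ) (hk : k < L.length) :
    L.take (k + 1) = L.take k ++ [L.get ⟨k, hk⟩] := by
  rw [List.take_succ, List.getElem?_eq_getElem hk]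
  rfl

/-- The greedy left-to-right p-representation of `T` with respect to `P` (each block
cannot be extended by the next character of the text and still occur in `P`) has the
minimum possible number of blocks among all p-representations of `T`. -/
theorem greedy_p_representation_minimal
    {α : Type*} (P T : List α) (hocc : ∀ a ∈ T, a ∈ P)
    (R : List (List α)) (hjoin : R.flatten = T)
    (hne : ∀ B ∈ R, B ≠ []) (hinf : ∀ B ∈ R, B <:+: P)
    (hgreedy : ∀ i, (h : i + 1 < R.length) → ∀ c ∈ (R.get ⟨i + 1, h⟩).head?,
        ¬ (R.get ⟨i, by omega⟩ ++ [c]) <:+: P) :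
    ∀ R' : List (List α), R'.flatten = T → (∀ B ∈ R', B ≠ [] ∧ B <:+: P) →
      R.length ≤ R'.length := by
  intro R' hjoin' hR'
  have hj : R.flatten = T := hjoin
  have hj' : R'.flatten = T := hjoin'
  -- key invariant: greedy prefix sums dominate
  have key : ∀ k, k ≤ R'.length →
      (R'.take k).flatten.length ≤ (R.take k).flatten.length := by
    intro k
    induction k with
    | zero => simp
    | succ k ih =>
      intro hk1
      have hk' : k < R'.length := by omega
      have ihk := ih (by omega)
      by_cases hkR : k < R.length
      · set s := (R.take k).flatten.length with hs
        set t := (R'.take k).flatten.length with ht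
        have hBk : R.get ⟨k, hkR⟩ = (T.drop s).take (R.get ⟨k, hkR⟩).length := by
          have := block_eq_seg R k hkR
          rwa [hj] at this
        have hBk' : R'.get ⟨k, hk'⟩ = (T.drop t).take (R'.get ⟨k, hk'⟩).length := by
          have := block_eq_seg R' k hk'
          rwa [hj'] at this
        have hT1 : (R.take (k + 1)).flatten.length = s + (R.get ⟨k, hkR⟩).length := by
          rw [take_succ_eq R k hkR, List.flatten_append, List.length_append, ← hs]
          simp
        have hT1' : (R'.take (k + 1)).flatten.length =
            t + (R'.get ⟨k, hk'⟩).length := by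
          rw [take_succ_eq R' k hk', List.flatten_append, List.length_append, ← ht]
          simp
        rw [hT1, hT1']
        by_contra hcon
        push_neg at hcon
        have hlt : s + (R.get ⟨k, hkR⟩).length < t + (R'.get ⟨k, hk'⟩).length := by
          omega
        -- the position after the greedy block is inside T
        have htT : t + (R'.get ⟨k, hk'⟩).length ≤ T.length := by
          have h5 : (R'.take (k + 1)).flatten.length ≤ R'.flatten.length :=
            flatten_take_le R' (k + 1)
          rw [hT1', hj'] at h5
          exact h5
        have hpos : s + (R.get ⟨k, hkR⟩).length < T.length := by omega
        -- hence there is a next greedy block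
        have hk1R : k + 1 < R.length := by
          by_contra hno
          have hRt : R.take (k + 1) = R := List.take_of_length_le (by omega)
          rw [hRt, hj] at hT1
          omega
        -- the next greedy block as a segment of T
        have hBk1 : R.get ⟨k + 1, hk1R⟩ =
            (T.drop (s + (R.get ⟨k, hkR⟩).length)).take
              (R.get ⟨k + 1, hk1R⟩).length := by
          have := block_eq_seg R (k + 1) hk1R
          rwa [hj, hT1] at this
        obtain ⟨hne', hinf'⟩ := hR' _ (List.get_mem R' ⟨k, hk'⟩)
        have hd : T.drop (s + (R.get ⟨k, hkR⟩).length) ≠ [] := by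
          intro h
          have h9 : T.length - (s + (R.get ⟨k, hkR⟩).length) = 0 := by
            simpa using congrArg List.length h
          omega
        obtain ⟨c, cs, hcs⟩ := List.exists_cons_of_ne_nil hd
        have hlen1 : (R.get ⟨k + 1, hk1R⟩).length ≠ 0 := by
          intro h0
          exact hne _ (List.get_mem R _) (List.eq_nil_of_length_eq_zero h0)
        obtain ⟨m, hm⟩ : ∃ m, (R.get ⟨k + 1, hk1R⟩).length = m + 1 := by
          cases h : (R.get ⟨k + 1, hk1R⟩).length with
          | zero => exact absurd h hlen1
          | succ m => exact ⟨m, rfl⟩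
        have hhead : c ∈ (R.get ⟨k + 1, hk1R⟩).head? := by
          rw [hBk1, hm, hcs]
          simp
        have hext : R.get ⟨k, hkR⟩ ++ [c] =
            (T.drop s).take ((R.get ⟨k, hkR⟩).length + 1) := by
          rw [List.take_add, List.drop_drop, hcs, ← hBk]
          rfl
        have hseg : (T.drop s).take ((R.get ⟨k, hkR⟩).length + 1) <:+:
            (T.drop t).take (R'.get ⟨k, hk'⟩).length :=
          seg_infix_seg T ihk (by omega)
        have hfin : (R.get ⟨k, hkR⟩ ++ [c]) <:+: P := by
          rw [hext]
          exact hseg.trans (hBk' ▸ hinf')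
        exact hgreedy k hk1R c hhead hfin
      · -- R already exhausted: its take (k+1) flatten is all of T
        have hR : R.take (k + 1) = R := List.take_of_length_le (by omega)
        rw [hR, hj]
        calc (R'.take (k + 1)).flatten.length ≤ R'.flatten.length :=
              flatten_take_le R' (k + 1)
          _ = T.length := by rw [hj']
  -- finish: compare at k = R'.length
  by_contra hlt
  push_neg at hlt
  have h1 := key R'.length le_rfl
  rw [List.take_of_length_le le_rfl, hj'] at h1
  -- R.take R'.length misses the nonempty block R[R'.length]
  have h2 : (R.take R'.length).flatten.length + (R.get ⟨R'.length, hlt⟩).length ≤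
      R.flatten.length := flatten_take_add_le R R'.length hlt
  have h3 : (R.get ⟨R'.length, hlt⟩).length ≠ 0 := by
    intro h0
    exact hne _ (List.get_mem R _) (List.eq_nil_of_length_eq_zero h0)
  rw [hj] at h2
  omega
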